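/- If z_1 = 0, z_2 = 1, z_3 = 2 and z_4,…,z_l are arbitrary, then the Euler operator E = X∂ does not lie in the subalgebra of differential operators on ℂ* generated by X and L = X^{-1}(E−z_1)⋯(E−z_l). Specifically, on the 2-dimensional module V = ℂ[X]/(X²), L acts by 0 and X acts nilpotently, so every element of the subalgebra generated by L and X acts on V with a single eigenvalue, while E acts with eigenvalues 0 and 1. -/

import Mathlib

/- STATEMENT 1: If z_1 = 0, z_2 = 1, z_3 = 2 and z_4,…,z_l are arbitrary, then
the Euler operator E = X∂ does not lie in the subalgebra of differential
operators on ℂ* generated by X and L = X^{-1}(E−z_1)⋯(E−z_l). -/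

noncomputable section

abbrev ExpMod := ℂ →₀ ℂ

noncomputable def Xop : Module.End ℂ ExpMod := Finsupp.lmapDomain ℂ ℂ (fun u => u + 1)

noncomputable def Xinv : Module.End ℂ ExpMod := Finsupp.lmapDomain ℂ ℂ (fun u => u - 1)

noncomputable def Dop : Module.End ℂ ExpMod :=
  Finsupp.lsum ℂ (fun u => LinearMap.toSpanSingleton ℂ ExpMod
    (u • Finsupp.single (u - 1) (1 : ℂ)))

noncomputable def Eop : Module.End ℂ ExpMod := Xop * Dop

noncomputable def Lop (l : ℕ) (z : Fin l → ℂ) : Module.End ℂ ExpMod :=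
  Xinv * ((List.ofFn (fun i : Fin l => Eop - z i • (1 : Module.End ℂ ExpMod))).prod)

lemma Xop_single (u : ℂ) : Xop (Finsupp.single u (1:ℂ)) = Finsupp.single (u+1) 1 := by
  simp [Xop, Finsupp.lmapDomain_apply, Finsupp.mapDomain_single]
lemma Xinv_single (u : ℂ) : Xinv (Finsupp.single u (1:ℂ)) = Finsupp.single (u-1) 1 := by
  simp [Xinv, Finsupp.lmapDomain_apply, Finsupp.mapDomain_single]
lemma Eop_single (u : ℂ) : Eop (Finsupp.single u (1:ℂ)) = u • Finsupp.single u 1 := by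
  have : Dop (Finsupp.single u (1:ℂ)) = u • Finsupp.single (u-1) (1:ℂ) := by
    simp [Dop, Finsupp.lsum_single, LinearMap.toSpanSingleton_apply]
  rw [Eop, Module.End.mul_apply, this, map_smul, Xop_single, sub_add_cancel]
lemma prod_apply_single (n : ℂ) (zs : List ℂ) :
    ((zs.map (fun w => Eop - w • (1 : Module.End ℂ ExpMod))).prod) (Finsupp.single n (1:ℂ))
      = (zs.map (fun w => n - w)).prod • Finsupp.single n 1 := by
  induction zs with
  | nil => simp
  | cons w t ih =>
    simp only [List.map_cons, List.prod_cons, Module.End.mul_apply, ih, map_smul,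
      LinearMap.sub_apply, LinearMap.smul_apply, Module.End.one_apply, Eop_single, smul_smul]
    rw [← sub_smul, smul_smul, mul_comm]
lemma Lop_single (l : ℕ) (z : Fin l → ℂ) (n : ℂ) :
    Lop l z (Finsupp.single n (1:ℂ))
      = ((List.ofFn z).map (fun w => n - w)).prod • Finsupp.single (n-1) 1 := by
  have : (List.ofFn (fun i : Fin l => Eop - z i • (1 : Module.End ℂ ExpMod)))
      = (List.ofFn z).map (fun w => Eop - w • (1 : Module.End ℂ ExpMod)) := by
    rw [List.map_ofFn]; rfl
  rw [Lop, Module.End.mul_apply, this, prod_apply_single, map_smul, Xinv_single]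

/-- The span of the monomials `X^n`, `n ≥ m`. -/
def SS (m : ℕ) : Submodule ℂ ExpMod :=
  Submodule.span ℂ {f | ∃ n : ℕ, m ≤ n ∧ f = Finsupp.single (n:ℂ) 1}

lemma single_mem_SS {m n : ℕ} (h : m ≤ n) : Finsupp.single ((n:ℂ)) (1:ℂ) ∈ SS m :=
  Submodule.subset_span ⟨n, h, rfl⟩

lemma coeff_eq_zero_of_mem_SS {m : ℕ} {x : ℂ} (hx : ∀ n : ℕ, m ≤ n → (n:ℂ) ≠ x)
    {v : ExpMod} (hv : v ∈ SS m) : v x = 0 := by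
  have : SS m ≤ LinearMap.ker (Finsupp.lapply (M := ℂ) (R := ℂ) x) := by
    rw [SS, Submodule.span_le]
    rintro f ⟨n, hn, rfl⟩
    simp [LinearMap.mem_ker, Finsupp.lapply_apply, Finsupp.single_apply_eq_zero]
    intro h; exact absurd h.symm (hx n hn)
  exact this hv

/-- Operators acting triangularly with a single diagonal scalar on `ℂ[X]/(X²)`. -/
def GoodAlg : Subalgebra ℂ (Module.End ℂ ExpMod) where
  carrier := {P | ∃ c : ℂ,
    P (Finsupp.single (0:ℂ) (1:ℂ)) - c • Finsupp.single (0:ℂ) (1:ℂ) ∈ SS 1 ∧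
    P (Finsupp.single (1:ℂ) (1:ℂ)) - c • Finsupp.single (1:ℂ) (1:ℂ) ∈ SS 2 ∧
    (∀ v ∈ SS 1, P v ∈ SS 1) ∧ (∀ v ∈ SS 2, P v ∈ SS 2)}
  mul_mem' := by
    rintro P Q ⟨c, hc0, hc1, hcS1, hcS2⟩ ⟨d, hd0, hd1, hdS1, hdS2⟩
    refine ⟨c * d, ?_, ?_, fun v hv => hcS1 _ (hdS1 v hv), fun v hv => hcS2 _ (hdS2 v hv)⟩
    · have key : (P * Q) (Finsupp.single (0:ℂ) (1:ℂ)) - (c*d) • Finsupp.single (0:ℂ) (1:ℂ)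
          = P (Q (Finsupp.single (0:ℂ) (1:ℂ)) - d • Finsupp.single (0:ℂ) (1:ℂ))
            + d • (P (Finsupp.single (0:ℂ) (1:ℂ)) - c • Finsupp.single (0:ℂ) (1:ℂ)) := by
        rw [Module.End.mul_apply, map_sub, map_smul]; module
      rw [key]; exact add_mem (hcS1 _ hd0) (Submodule.smul_mem _ d hc0)
    · have key : (P * Q) (Finsupp.single (1:ℂ) (1:ℂ)) - (c*d) • Finsupp.single (1:ℂ) (1:ℂ)
          = P (Q (Finsupp.single (1:ℂ) (1:ℂ)) - d • Finsupp.single (1:ℂ) (1:ℂ))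
            + d • (P (Finsupp.single (1:ℂ) (1:ℂ)) - c • Finsupp.single (1:ℂ) (1:ℂ)) := by
        rw [Module.End.mul_apply, map_sub, map_smul]; module
      rw [key]; exact add_mem (hcS2 _ hd1) (Submodule.smul_mem _ d hc1)
  add_mem' := by
    rintro P Q ⟨c, hc0, hc1, hcS1, hcS2⟩ ⟨d, hd0, hd1, hdS1, hdS2⟩
    refine ⟨c + d, ?_, ?_, fun v hv => ?_, fun v hv => ?_⟩
    · have key : (P + Q) (Finsupp.single (0:ℂ) (1:ℂ)) - (c+d) • Finsupp.single (0:ℂ) (1:ℂ)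
          = (P (Finsupp.single (0:ℂ) (1:ℂ)) - c • Finsupp.single (0:ℂ) (1:ℂ))
            + (Q (Finsupp.single (0:ℂ) (1:ℂ)) - d • Finsupp.single (0:ℂ) (1:ℂ)) := by
        rw [LinearMap.add_apply]; module
      rw [key]; exact add_mem hc0 hd0
    · have key : (P + Q) (Finsupp.single (1:ℂ) (1:ℂ)) - (c+d) • Finsupp.single (1:ℂ) (1:ℂ)
          = (P (Finsupp.single (1:ℂ) (1:ℂ)) - c • Finsupp.single (1:ℂ) (1:ℂ))
            + (Q (Finsupp.single (1:ℂ) (1:ℂ)) - d • Finsupp.single (1:ℂ) (1:ℂ)) := by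
        rw [LinearMap.add_apply]; module
      rw [key]; exact add_mem hc1 hd1
    · rw [LinearMap.add_apply]; exact add_mem (hcS1 v hv) (hdS1 v hv)
    · rw [LinearMap.add_apply]; exact add_mem (hcS2 v hv) (hdS2 v hv)
  one_mem' := by
    exact ⟨1, by simp [zero_mem], by simp [zero_mem], fun v hv => by simpa using hv,
      fun v hv => by simpa using hv⟩
  zero_mem' := by
    refine ⟨0, ?_, ?_, fun v hv => ?_, fun v hv => ?_⟩ <;> simp [zero_mem]
  algebraMap_mem' := by
    intro r
    exact ⟨r, by simp [Module.algebraMap_end_apply, zero_mem],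
      by simp [Module.algebraMap_end_apply, zero_mem],
      fun v hv => by simpa [Module.algebraMap_end_apply] using Submodule.smul_mem _ r hv,
      fun v hv => by simpa [Module.algebraMap_end_apply] using Submodule.smul_mem _ r hv⟩
lemma prod_zero {l : ℕ} (z : Fin l → ℂ) (n : ℂ) (i : Fin l) (h : z i = n) :
    ((List.ofFn z).map (fun w => n - w)).prod = 0 := by
  apply List.prod_eq_zero
  refine List.mem_map.mpr ⟨z i, ?_, by rw [h]; ring⟩
  simp [List.mem_ofFn]

lemma Xop_maps_SS (m : ℕ) : ∀ v ∈ SS m, Xop v ∈ SS m := by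
  intro v hv
  have key : SS m ≤ (SS m).comap Xop := by
    rw [SS, Submodule.span_le]
    rintro f ⟨n, hn, rfl⟩
    refine Submodule.mem_comap.mpr ?_
    rw [Xop_single]
    have : ((n:ℂ) + 1) = ((n+1 : ℕ) : ℂ) := by push_cast; ring
    rw [this]
    exact single_mem_SS (by omega)
  exact key hv

lemma Xop_mem : Xop ∈ GoodAlg := by
  refine ⟨0, ?_, ?_, Xop_maps_SS 1, Xop_maps_SS 2⟩
  · rw [Xop_single]
    have : ((0:ℂ) + 1) = ((1 : ℕ) : ℂ) := by norm_num
    simpa [this] using single_mem_SS (le_refl 1)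
  · rw [Xop_single]
    have : ((1:ℂ) + 1) = ((2 : ℕ) : ℂ) := by norm_num
    simpa [this] using single_mem_SS (le_refl 2)

lemma Lop_single_nat {l : ℕ} (hl : 3 ≤ l) (z : Fin l → ℂ)
    (h1 : z ⟨1, by linarith⟩ = 1) (h2 : z ⟨2, by linarith⟩ = 2) (n : ℕ) (hn : 1 ≤ n) :
    Lop l z (Finsupp.single ((n:ℂ)) (1:ℂ)) ∈ SS 2 := by
  rw [Lop_single]
  rcases Nat.lt_or_ge n 3 with h | h
  · interval_cases n
    · rw [prod_zero z _ ⟨1, by linarith⟩ (by rw [h1]; norm_num), zero_smul]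
      exact zero_mem _
    · rw [prod_zero z _ ⟨2, by linarith⟩ (by rw [h2]; norm_num), zero_smul]
      exact zero_mem _
  · have : ((n:ℂ) - 1) = ((n - 1 : ℕ) : ℂ) := by
      have : (1:ℕ) ≤ n := by omega
      push_cast [this]; ring
    rw [this]
    exact Submodule.smul_mem _ _ (single_mem_SS (by omega))

lemma Lop_maps_SS {l : ℕ} (hl : 3 ≤ l) (z : Fin l → ℂ)
    (h1 : z ⟨1, by linarith⟩ = 1) (h2 : z ⟨2, by linarith⟩ = 2) (m : ℕ) (hm : 1 ≤ m) (hm2 : m ≤ 2) :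
    ∀ v ∈ SS m, Lop l z v ∈ SS m := by
  intro v hv
  have key : SS m ≤ (SS m).comap (Lop l z) := by
    rw [SS, Submodule.span_le]
    rintro f ⟨n, hn, rfl⟩
    refine Submodule.mem_comap.mpr ?_
    have h3 := Lop_single_nat hl z h1 h2 n (by omega)
    have key2 : SS 2 ≤ SS m := by
      rw [SS, Submodule.span_le]
      rintro g ⟨k, hk, rfl⟩
      exact single_mem_SS (by omega)
    exact key2 h3
  exact key hv

lemma Lop_mem {l : ℕ} (hl : 3 ≤ l) (z : Fin l → ℂ) (h0 : z ⟨0, by linarith⟩ = 0)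
    (h1 : z ⟨1, by linarith⟩ = 1) (h2 : z ⟨2, by linarith⟩ = 2) : Lop l z ∈ GoodAlg := by
  refine ⟨0, ?_, ?_, Lop_maps_SS hl z h1 h2 1 le_rfl one_le_two, Lop_maps_SS hl z h1 h2 2 one_le_two le_rfl⟩
  · rw [Lop_single, prod_zero z _ ⟨0, by linarith⟩ h0, zero_smul]
    simp
  · rw [Lop_single, prod_zero z _ ⟨1, by linarith⟩ h1, zero_smul]
    simp

theorem statement1 (l : ℕ) (hl : 3 ≤ l) (z : Fin l → ℂ)
    (h0 : z ⟨0, by omega⟩ = 0) (h1 : z ⟨1, by omega⟩ = 1) (h2 : z ⟨2, by omega⟩ = 2) :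
    Eop ∉ Algebra.adjoin ℂ {Xop, Lop l z} := by
  intro hmem
  have hle : Algebra.adjoin ℂ {Xop, Lop l z} ≤ GoodAlg := by
    refine Algebra.adjoin_le ?_
    rintro P (rfl | rfl)
    · exact Xop_mem
    · exact Lop_mem hl z h0 h1 h2
  obtain ⟨c, hc0, hc1, -, -⟩ := hle hmem
  rw [Eop_single, zero_smul, zero_sub] at hc0
  have hcz : c = 0 := by
    have h := coeff_eq_zero_of_mem_SS (m := 1) (x := (0:ℂ))
      (fun n hn hn' => by exact_mod_cast absurd hn' (by exact_mod_cast by omega)) hc0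
    simpa using h
  rw [Eop_single, one_smul, hcz, zero_smul, sub_zero] at hc1
  have h := coeff_eq_zero_of_mem_SS (m := 2) (x := (1:ℂ))
    (fun n hn hn' => by
      have : n = 1 := by exact_mod_cast hn'
      omega) hc1
  simp at h

end
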